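/- Let A be a ring, J a finitely generated ideal of A, and (M_i)_{i∈I} a family of A-modules. Then the submodule J·(∏_i M_i) of the product module equals the product ∏_i (J·M_i). -/

import Mathlib

lemma mem_span_finset_smul_top {A : Type*} [CommRing A] {M : Type*} [AddCommGroup M]
    [Module A M] {s : Finset A} {x : M}
    (hx : x ∈ (Ideal.span (s : Set A)) • (⊤ : Submodule A M)) :
    ∃ y : s → M, ∑ j : s, (j : A) • y j = x := by
  refine Submodule.smul_induction_on hx ?_ ?_
  · intro r hr n _
    obtain ⟨f, -, hf⟩ := Submodule.mem_span_finset.mp hr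
    refine ⟨fun j => f j • n, ?_⟩
    rw [← hf, Finset.sum_smul, ← Finset.sum_attach s (fun j => (f j • j) • n)]
    exact Finset.sum_congr rfl fun j _ => by
      rw [smul_eq_mul, mul_smul, smul_comm]
  · rintro a b ⟨y, hy⟩ ⟨z, hz⟩
    exact ⟨fun j => y j + z j, by simp only [smul_add, Finset.sum_add_distrib, hy, hz]⟩

/-- Let `A` be a ring, `J` a finitely generated ideal of `A`, and `(M i)_{i ∈ ι}` a family of
`A`-modules. Then the submodule `J • (∏ i, M i)` of the product module equals the product
`∏ i, (J • M i)`, i.e. the submodule of families whose `i`-th component lies in `J • M i`. -/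
theorem smul_top_pi_eq_pi_smul_top {A : Type*} [CommRing A] (J : Ideal A) (hJ : J.FG)
    {ι : Type*} (M : ι → Type*) [∀ i, AddCommGroup (M i)] [∀ i, Module A (M i)] :
    (J • ⊤ : Submodule A (∀ i, M i)) =
      Submodule.pi Set.univ (fun i => (J • ⊤ : Submodule A (M i))) := by
  obtain ⟨s, rfl⟩ := hJ
  apply le_antisymm
  · rw [Submodule.smul_le]
    intro r hr n _ i _
    exact Submodule.smul_mem_smul hr trivial
  · intro x hx
    choose y hy using fun i => mem_span_finset_smul_top (hx i (Set.mem_univ i))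
    have : x = ∑ j : s, (j : A) • (fun i => y i j) := by
      funext i
      rw [← hy i]
      simp
    rw [this]
    exact Submodule.sum_mem _ fun j _ =>
      Submodule.smul_mem_smul (Ideal.subset_span j.2) trivial
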